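/- arXiv:2403.18999 — 7 statements merged into one kernel-verified Lean document; each statement's English description precedes it below -/
import Mathlib

section
/- Footprints of separating conjunctions are unions of footprints of operands: for any model (s,h), FP_{(s,h)}(ψ1 ∗ ψ2) ⊆ {F1 ∪ F2 | F1 ∈ FP_{(s,h)}(ψ1), F2 ∈ FP_{(s,h)}(ψ2)}. -/
section

variable {Vars Loc : Type*}

/-- Domain of a heap. -/
def hdom (h : Loc → Option Loc) : Set Loc := {l | h l ≠ none}

/-- Disjointness of heaps (disjoint domains). -/
def HDisj (h1 h2 : Loc → Option Loc) : Prop := Disjoint (hdom h1) (hdom h2)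

/-- Disjoint union of heaps (left-biased union, used under disjointness). -/
def hunion (h1 h2 : Loc → Option Loc) : Loc → Option Loc :=
  fun l => (h1 l).orElse (fun _ => h2 l)

open Classical in
/-- Restriction of a heap to a set of locations. -/
noncomputable def hrestrict (h : Loc → Option Loc) (F : Set Loc) : Loc → Option Loc :=
  fun l => if l ∈ F then h l else none

/-- Footprints of a formula `P` (a predicate on heaps, the stack being fixed)
in the model with heap `h`. -/
def FP (P : (Loc → Option Loc) → Prop) (h : Loc → Option Loc) : Set (Set Loc) :=
  {F | F ⊆ hdom h ∧ P (hrestrict h F)}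

/-- Semantics of separating conjunction. -/
def SepStar (P1 P2 : (Loc → Option Loc) → Prop) (h : Loc → Option Loc) : Prop :=
  ∃ h1 h2, HDisj h1 h2 ∧ h = hunion h1 h2 ∧ P1 h1 ∧ P2 h2

/-- Footprints of a separating conjunction are unions of footprints of the
operands. -/
theorem stmt6 (P1 P2 : (Loc → Option Loc) → Prop) (h : Loc → Option Loc) :
    FP (SepStar P1 P2) h ⊆
      {F | ∃ F1 ∈ FP P1 h, ∃ F2 ∈ FP P2 h, F = F1 ∪ F2} := by
  rintro F ⟨hFsub, h1, h2, hdisj, heq, hP1, hP2⟩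
  classical
  have hmemF : ∀ l ∈ F, h l ≠ none := fun l hl => hFsub hl
  have key : ∀ l, hrestrict h F l = hunion h1 h2 l := fun l => by rw [← heq]
  have hd1 : hdom h1 ⊆ F := by
    intro l hl
    by_contra hlF
    obtain ⟨v, hv⟩ := Option.ne_none_iff_exists'.mp hl
    have := key l
    simp [hrestrict, hlF, hunion, hv] at this
  have hd2 : hdom h2 ⊆ F := by
    intro l hl
    by_contra hlF
    obtain ⟨v, hv⟩ := Option.ne_none_iff_exists'.mp hl
    have := key l
    cases hc : h1 l <;> simp [hrestrict, hlF, hunion, hv, hc] at this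
  have e1 : hrestrict h (hdom h1) = h1 := by
    funext l
    by_cases hl : l ∈ hdom h1
    · obtain ⟨v, hv⟩ := Option.ne_none_iff_exists'.mp hl
      have hk := key l
      simp [hrestrict, hd1 hl, hunion, hv] at hk
      simp [hrestrict, hdom, hv, hk]
    · simp only [hdom, Set.mem_setOf_eq, not_not] at hl
      simp [hrestrict, hdom, hl]
  have e2 : hrestrict h (hdom h2) = h2 := by
    funext l
    by_cases hl : l ∈ hdom h2
    · obtain ⟨v, hv⟩ := Option.ne_none_iff_exists'.mp hl
      have h1none : h1 l = none := by
        by_contra hne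
        exact (Set.disjoint_left.mp hdisj hne) hl
      have hk := key l
      simp [hrestrict, hd2 hl, hunion, hv, h1none] at hk
      simp [hrestrict, hdom, hv, hk]
    · simp only [hdom, Set.mem_setOf_eq, not_not] at hl
      simp [hrestrict, hdom, hl]
  refine ⟨hdom h1, ⟨hd1.trans hFsub, by rw [e1]; exact hP1⟩,
          hdom h2, ⟨hd2.trans hFsub, by rw [e2]; exact hP2⟩, ?_⟩
  ext l
  constructor
  · intro hl
    have hu : hunion h1 h2 l ≠ none := by
      rw [← key l]; simp [hrestrict, hl]; exact hmemF l hl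
    by_cases h1l : h1 l = none
    · right; simpa [hdom, hunion, h1l] using hu
    · left; exact h1l
  · rintro (hl | hl)
    · exact hd1 hl
    · exact hd2 hl

end
end

section
/- In a satisfiable model of a singly-linked list segment, the heap domain equals the domain of the unique n-path from the root to the sink: (s,h) ⊨ sls(x,y) if and only if there exists an n-path σ from s(x) to s(y) in the heap graph of (s,h) such that dom(h) = dom(σ). -/
section

variable {Vars Loc : Type*}

/-- Image of a heap. -/
def himg (h : Loc → Option Loc) : Set Loc := {l | ∃ l', h l' = some l}

/-- The singly-linked list segment predicate `sls`, defined inductively: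
either the segment is empty (`a = b`, empty heap), or `a ≠ b`, `a` points to
some `l`, and the rest of the heap is a list segment from `l` to `b`. -/
inductive Sls : (Loc → Option Loc) → Loc → Loc → Prop
  | nil (h : Loc → Option Loc) (a : Loc) (he : ∀ l, h l = none) : Sls h a a
  | cons (h h' : Loc → Option Loc) (a b l : Loc) (hab : a ≠ b)
      (ha : h a = some l) (ha' : h' a = none)
      (hrest : ∀ m, m ≠ a → h m = h' m) (tail : Sls h' l b) : Sls h a b

/-- `σ` is an n-path from `x` to `y` in the heap graph of `h`. -/
def IsPath (h : Loc → Option Loc) (σ : List Loc) (x y : Loc) : Prop :=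
  σ.Nodup ∧ σ.head? = some x ∧ σ.getLast? = some y ∧
  ∀ (i : ℕ) v w, σ[i]? = some v → σ[i + 1]? = some w → h v = some w

lemma sls_to_path {h : Loc → Option Loc} {a b : Loc} (H : Sls h a b) :
    ∃ σ : List Loc, IsPath h σ a b ∧ hdom h = {l | l ∈ σ.dropLast} := by
  induction H with
  | nil h a he =>
    refine ⟨[a], ⟨List.nodup_singleton a, rfl, rfl, ?_⟩, ?_⟩
    · intro i v w hv hw
      rcases i with _ | i <;> simp at hw
    · ext l; simp [hdom, he]
  | cons h h' a b l hab ha ha' hrest tail ih =>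
    obtain ⟨σ', ⟨hnd, hhd, hlast, hstep⟩, hd'⟩ := ih
    obtain ⟨l0, σ'', rfl⟩ : ∃ l0 σ'', σ' = l0 :: σ'' := by
      cases σ' with
      | nil => simp at hhd
      | cons c cs => exact ⟨c, cs, rfl⟩
    have hl0 : l0 = l := by simpa using hhd
    subst hl0
    have hane : (l0 :: σ'') ≠ [] := by simp
    have hmem : a ∉ l0 :: σ'' := by
      intro hmem
      rw [← List.dropLast_append_getLast hane] at hmem
      rcases List.mem_append.1 hmem with h1 | h2
      · have : a ∈ hdom h' := by rw [hd']; exact h1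
        exact this ha'
      · have hg := List.getLast?_eq_getLast (l := l0 :: σ'') hane
        rw [hg] at hlast
        have hb : (l0 :: σ'').getLast hane = b := Option.some.inj hlast
        have : a = b := by rw [← hb]; simpa using h2
        exact hab this
    refine ⟨a :: l0 :: σ'', ⟨List.nodup_cons.2 ⟨hmem, hnd⟩, rfl, ?_, ?_⟩, ?_⟩
    · simpa using hlast
    · intro i v w hv hw
      rcases i with _ | i
      · simp at hv hw
        subst hv; subst hw; exact ha
      · simp only [List.getElem?_cons_succ] at hv hw
        have hv' : v ∈ l0 :: σ'' := List.mem_of_getElem? hv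
        have hva : v ≠ a := fun e => hmem (e ▸ hv')
        rw [hrest v hva]
        exact hstep i v w hv hw
    · ext m
      have hm' := Set.ext_iff.1 hd' m
      simp only [hdom, Set.mem_setOf_eq] at hm' ⊢
      by_cases hma : m = a
      · subst hma; simp [ha]
      · rw [hrest m hma, hm']
        simp [hma]

lemma path_to_sls {b : Loc} : ∀ (σ : List Loc) (h : Loc → Option Loc) (a : Loc),
    IsPath h σ a b → hdom h = {l | l ∈ σ.dropLast} → Sls h a b := by
  intro σ
  induction σ with
  | nil => intro h a hp _; exact absurd hp.2.1 (by simp)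
  | cons c cs ih =>
    intro h a hp hd
    obtain ⟨hnd, hhd, hlast, hstep⟩ := hp
    have hac : a = c := by simpa using hhd.symm
    subst hac
    cases cs with
    | nil =>
      have hb : b = a := by simpa using hlast.symm
      subst hb
      refine Sls.nil h b ?_
      intro l
      by_contra hne
      have : l ∈ ([b] : List Loc).dropLast := by
        rw [← Set.mem_setOf_eq (p := fun l => l ∈ ([b] : List Loc).dropLast), ← hd]
        exact hne
      simp at this
    | cons d rest =>
      classical
      have hcd : h a = some d := hstep 0 a d (by simp) (by simp)
      have hlast' : (d :: rest).getLast? = some b := by simpa using hlast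
      have hbmem : b ∈ d :: rest := by
        have hg := List.getLast?_eq_getLast (l := d :: rest) (by simp)
        rw [hg] at hlast'
        rw [← Option.some.inj hlast']
        exact List.getLast_mem _
      have hcnot : a ∉ d :: rest := (List.nodup_cons.1 hnd).1
      have hab : a ≠ b := fun e => hcnot (e ▸ hbmem)
      set h' : Loc → Option Loc := fun m => if m = a then none else h m with hh'
      have hrest : ∀ m, m ≠ a → h m = h' m := by
        intro m hm; simp [hh', hm]
      have hd'' : hdom h' = {l | l ∈ (d :: rest).dropLast} := by
        ext m
        have hm' := Set.ext_iff.1 hd m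
        simp only [hdom, Set.mem_setOf_eq] at hm' ⊢
        by_cases hma : m = a
        · subst hma
          have hnm : m ∉ (d :: rest).dropLast :=
            fun hm => hcnot (List.dropLast_subset _ hm)
          simp [hh', hnm]
        · rw [← hrest m hma, hm']
          simp [hma]
      have tail : Sls h' d b := by
        refine ih h' d ⟨(List.nodup_cons.1 hnd).2, rfl, hlast', ?_⟩ hd''
        intro i v w hv hw
        have hv' : v ∈ d :: rest := List.mem_of_getElem? hv
        have hva : v ≠ a := fun e => hcnot (e ▸ hv')
        rw [← hrest v hva]
        exact hstep (i + 1) v w (by simpa using hv) (by simpa using hw)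
      exact Sls.cons h h' a b d hab hcd (by simp [hh']) hrest tail

/-- A heap satisfies `sls(x,y)` iff there is an n-path from `s x` to `s y`
whose domain (all vertices but the last) is exactly the heap domain. -/
theorem stmt9 (s : Vars → Loc) (x y : Vars) (h : Loc → Option Loc) :
    Sls h (s x) (s y) ↔
      ∃ σ : List Loc, IsPath h σ (s x) (s y) ∧ hdom h = {l | l ∈ σ.dropLast} := by
  constructor
  · exact sls_to_path
  · rintro ⟨σ, hp, hd⟩
    exact path_to_sls σ h (s x) hp hd

end
end

section
/- A list segment model containing a stack-referenced interior location is not atomic: if (s,h) ⊨ sls(x,y) with h nonempty, and ℓ ∈ dom(h) is a location with ℓ ∈ img(s) and ℓ ≠ s(x), then there exist nonempty disjoint heaps h1, h2 with h = h1 ⊎ h2, (s,h1) ⊨ sls(x,p) and (s,h2) ⊨ sls(p,y), where p is any variable with s(p) = ℓ. -/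
section

variable {Vars Loc : Type*}

theorem sls_split {h : Loc → Option Loc} {a b : Loc} (hsls : Sls h a b) :
    ∀ l, h l ≠ none →
      ∃ h1 h2, HDisj h1 h2 ∧ h = hunion h1 h2 ∧ Sls h1 a l ∧ Sls h2 l b ∧
        l ∈ hdom h2 ∧ (l ≠ a → a ∈ hdom h1) := by
  induction hsls with
  | nil h a he => exact fun l hl => absurd (he l) hl
  | cons h h' a b m hab ha ha' hrest tail ih =>
    intro l hl
    classical
    by_cases hla : l = a
    · subst hla
      refine ⟨fun _ => none, h, ?_, ?_, Sls.nil _ _ (fun _ => rfl),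
        Sls.cons h h' l b m hab ha ha' hrest tail, hl, fun hc => absurd rfl hc⟩
      · simp [HDisj, hdom]
      · funext n; simp [hunion]
    · have hl' : h' l ≠ none := by rw [← hrest l hla]; exact hl
      obtain ⟨h1, h2, hdisj, hu, hs1, hs2, hl2, _⟩ := ih l hl'
      have hua := congrFun hu a
      rw [ha'] at hua
      have h1a : h1 a = none := by
        cases e : h1 a with
        | none => rfl
        | some v => rw [hunion] at hua; simp [e] at hua
      have h2a : h2 a = none := by
        rw [hunion, h1a] at hua; simpa using hua.symm
      refine ⟨fun n => if n = a then some m else h1 n, h2, ?_, ?_, ?_, hs2, hl2, fun _ => ?_⟩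
      · rw [HDisj, Set.disjoint_left]
        intro n hn hn2
        rcases eq_or_ne n a with rfl | hna
        · exact hn2 h2a
        · have hn1 : n ∈ hdom h1 := by simpa [hdom, hna] using hn
          exact Set.disjoint_left.mp hdisj hn1 hn2
      · funext n
        rcases eq_or_ne n a with rfl | hna
        · simp [hunion, ha]
        · have := congrFun hu n
          rw [hrest n hna] at *
          simpa [hunion, hna] using this
      · exact Sls.cons _ h1 a l m (Ne.symm hla) (by simp) h1a
          (fun n hn => by simp [hn]) hs1
      · simp [hdom]

/-- A list segment model containing a stack-referenced interior location can be
split into two nonempty list segments, hence it is not atomic. -/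
theorem stmt11 (s : Vars → Loc) (x y p : Vars) (h : Loc → Option Loc)
    (hsls : Sls h (s x) (s y)) (hne : hdom h ≠ ∅) (l : Loc)
    (hl : l ∈ hdom h) (himgs : l ∈ Set.range s) (hlx : l ≠ s x)
    (hp : s p = l) :
    ∃ h1 h2, hdom h1 ≠ ∅ ∧ hdom h2 ≠ ∅ ∧ HDisj h1 h2 ∧ h = hunion h1 h2 ∧
      Sls h1 (s x) (s p) ∧ Sls h2 (s p) (s y) := by
  subst hp
  obtain ⟨h1, h2, hdisj, hu, hs1, hs2, hm2, hm1⟩ := sls_split hsls (s p) hl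
  exact ⟨h1, h2, Set.Nonempty.ne_empty ⟨s x, hm1 hlx⟩,
    Set.Nonempty.ne_empty ⟨s p, hm2⟩, hdisj, hu, hs1, hs2⟩

end
end

section
/- Positive models have no unlabeled dangling locations for list segments: if (s,h) ⊨ sls(x,y), then img(h) \ dom(h) ⊆ img(s), in fact img(h) \ dom(h) ⊆ {s(y)}. -/
section

variable {Vars Loc : Type*}

lemma sls_dangling {h : Loc → Option Loc} {a b : Loc} (hs : Sls h a b) :
    ∀ c ∈ himg h \ hdom h, c = b := by
  induction hs with
  | nil h a he =>
    rintro c ⟨⟨m, hm⟩, -⟩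
    simp [he m] at hm
  | cons h h' a b l hab ha ha' hrest tail ih =>
    rintro c ⟨⟨m, hm⟩, hc⟩
    simp only [hdom, Set.mem_setOf_eq, not_not] at hc
    have hca : c ≠ a := fun e => by rw [e, ha] at hc; exact Option.some_ne_none _ hc
    by_cases hma : m = a
    · subst hma
      rw [ha] at hm
      obtain rfl : l = c := Option.some.inj hm
      by_contra hcb
      cases tail with
      | nil h'' a' he => exact hcb rfl
      | cons h'' h''' a' b' l' hab' ha'' _ _ _ =>
        rw [← hrest _ hca, hc] at ha''
        exact Option.some_ne_none _ ha''.symm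
    · refine ih c ⟨⟨m, ?_⟩, ?_⟩
      · rw [← hrest m hma]; exact hm
      · simp only [hdom, Set.mem_setOf_eq, not_not]
        rw [← hrest c hca]; exact hc

/-- List segments have no unlabeled dangling locations: every dangling location
is `s y`, in particular it is in the image of the stack. -/
theorem stmt12 (s : Vars → Loc) (x y : Vars) (h : Loc → Option Loc)
    (hsls : Sls h (s x) (s y)) :
    himg h \ hdom h ⊆ Set.range s ∧ himg h \ hdom h ⊆ {s y} := by
  have key := sls_dangling hsls
  constructor
  · intro c hc; exact ⟨y, (key c hc).symm⟩
  · intro c hc; exact key c hc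

end
end

section
/- Acyclicity of list segments: if (s,h) ⊨ sls(x,y) with s(x) ≠ s(y), then s(y) ∉ dom(h), and for every ℓ ∈ dom(h) the iterates ℓ, h(ℓ), h²(ℓ), ... eventually reach s(y) without repeating any location. -/
section

variable {Vars Loc : Type*}

/-- `k`-fold iterate of the heap partial function (undefined if an
intermediate step is undefined). -/
def pit (h : Loc → Option Loc) : ℕ → Loc → Option Loc
  | 0, x => some x
  | n + 1, x => (h x).bind (pit h n)

lemma pit_add (h : Loc → Option Loc) (m n : ℕ) (x : Loc) :
    pit h (m + n) x = (pit h m x).bind (pit h n) := by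
  induction m generalizing x with
  | zero => simp [pit]
  | succ m ih =>
      rw [Nat.add_right_comm]
      show (h x).bind (pit h (m+n)) = _
      simp only [pit, Option.bind_assoc]
      cases h x with
      | none => rfl
      | some c => simpa using ih c

lemma sls_sink_not_dom {h : Loc → Option Loc} {a b : Loc} (hs : Sls h a b) :
    b ∉ hdom h := by
  induction hs with
  | nil h a he => simp [hdom, he]
  | cons h h' a b l hab ha ha' hrest tail ih =>
      simp only [hdom, Set.mem_setOf_eq, not_not] at ih ⊢
      rw [hrest b (Ne.symm hab)]; exact ih

lemma sls_key {h : Loc → Option Loc} {a b : Loc} (hs : Sls h a b) :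
    ∃ k, pit h k a = some b ∧
      (∀ i j, i ≤ k → j ≤ k → i ≠ j → pit h i a ≠ pit h j a) ∧
      hdom h = {c | ∃ i, i < k ∧ pit h i a = some c} := by
  induction hs with
  | nil h a he =>
      refine ⟨0, rfl, ?_, ?_⟩
      · intro i j hi hj hij; omega
      · ext c; simp [hdom, he]
  | cons h h' a b l hab ha ha' hrest tail ih =>
      obtain ⟨k, hk, hinj, hdomEq⟩ := ih
      have hnotdom : ∀ c, c ∈ hdom h' → c ≠ a := by
        intro c hc hca; exact hc (hca ▸ ha')
      -- iterates of h' and h agree from l up to k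
      have hsame : ∀ i, i ≤ k → pit h' i l = pit h i l := by
        intro i hi
        induction i with
        | zero => rfl
        | succ i ih2 =>
            have ih2' := ih2 (le_of_lt (Nat.lt_of_succ_le hi))
            have e1 := pit_add h' i 1 l
            have e2 := pit_add h i 1 l
            rw [e1, e2, ← ih2']
            cases hc : pit h' i l with
            | none => rfl
            | some c =>
                have hcdom : c ∈ hdom h' := by
                  rw [hdomEq]; exact ⟨i, Nat.lt_of_succ_le hi, hc⟩
                have hca : c ≠ a := hnotdom c hcdom
                show pit h' 1 c = pit h 1 c
                simp [pit, hrest c hca]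
      -- iterates of h from a
      have hstep : ∀ i, pit h (i + 1) a = pit h i l := by
        intro i
        show (h a).bind _ = _
        rw [ha]; rfl
      have hstep' : ∀ i, i ≤ k → pit h (i + 1) a = pit h' i l := by
        intro i hi; rw [hstep i, ← hsame i hi]
      refine ⟨k + 1, ?_, ?_, ?_⟩
      · rw [hstep' k le_rfl]; exact hk
      · -- injectivity
        have haux : ∀ j, j ≤ k → pit h (j + 1) a ≠ some a := by
          intro j hj heq
          rw [hstep' j hj] at heq
          rcases Nat.lt_or_ge j k with hjk | hjk
          · have : a ∈ hdom h' := by rw [hdomEq]; exact ⟨j, hjk, heq⟩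
            exact hnotdom a this rfl
          · have : j = k := le_antisymm hj hjk
            rw [this, hk] at heq
            exact hab (Option.some_injective _ heq).symm
        intro i j hi hj hij
        match i, j with
        | 0, 0 => exact absurd rfl hij
        | 0, j + 1 =>
            intro heq
            exact haux j (Nat.lt_succ_iff.mp hj) heq.symm
        | i + 1, 0 =>
            intro heq
            exact haux i (Nat.lt_succ_iff.mp hi) heq
        | i + 1, j + 1 =>
            have hi' := Nat.lt_succ_iff.mp hi
            have hj' := Nat.lt_succ_iff.mp hj
            rw [hstep' i hi', hstep' j hj']
            exact hinj i j hi' hj' (by omega)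
      · -- domain characterization
        ext c
        simp only [hdom, Set.mem_setOf_eq]
        constructor
        · intro hc
          rcases eq_or_ne c a with rfl | hca
          · exact ⟨0, Nat.succ_pos _, rfl⟩
          · have : c ∈ hdom h' := by
              simp only [hdom, Set.mem_setOf_eq]; rw [← hrest c hca]; exact hc
            rw [hdomEq] at this
            obtain ⟨i, hik, hic⟩ := this
            exact ⟨i + 1, by omega, by rw [hstep' i (le_of_lt hik)]; exact hic⟩
        · rintro ⟨i, hik, hic⟩
          match i with
          | 0 =>
              have : c = a := (Option.some_injective _ hic).symm
              rw [this, ha]; simp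
          | i + 1 =>
              have hik' : i < k := by omega
              rw [hstep' i (le_of_lt hik')] at hic
              have : c ∈ hdom h' := by rw [hdomEq]; exact ⟨i, hik', hic⟩
              rcases eq_or_ne c a with rfl | hca
              · exact absurd rfl (hnotdom _ this)
              · rw [hrest c hca]; exact this

/-- Acyclicity of list segments: the sink is not allocated, and from every
allocated location the iterates of `h` reach the sink without repetition. -/
theorem stmt15 (s : Vars → Loc) (x y : Vars) (h : Loc → Option Loc)
    (hsls : Sls h (s x) (s y)) (hxy : s x ≠ s y) :
    s y ∉ hdom h ∧
    ∀ l ∈ hdom h, ∃ k, pit h k l = some (s y) ∧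
      ∀ i j, i ≤ k → j ≤ k → i ≠ j → pit h i l ≠ pit h j l := by
  refine ⟨sls_sink_not_dom hsls, ?_⟩
  obtain ⟨k, hk, hinj, hdomEq⟩ := sls_key hsls
  intro l hl
  rw [hdomEq] at hl
  obtain ⟨i, hik, hil⟩ := hl
  have hshift : ∀ j, pit h j l = pit h (i + j) (s x) := by
    intro j
    rw [pit_add, hil]; rfl
  refine ⟨k - i, ?_, ?_⟩
  · rw [hshift, Nat.add_sub_cancel' (le_of_lt hik)]; exact hk
  · intro j1 j2 h1 h2 h12
    rw [hshift j1, hshift j2]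
    exact hinj (i + j1) (i + j2) (by omega) (by omega) (by omega)

end
end

section
/- Composition of list segments at an unallocated, non-sink-reaching point yields a list segment: if (s,h1) ⊨ sls(x,p), (s,h2) ⊨ sls(p,y), h1 and h2 are disjoint, and s(y) ∉ dom(h1), then (s, h1 ⊎ h2) ⊨ sls(x,y). -/
section

variable {Vars Loc : Type*}

theorem sls_comp (h1 h2 : Loc → Option Loc) (a b c : Loc)
    (H1 : Sls h1 a b) (H2 : Sls h2 b c) (hdisj : HDisj h1 h2)
    (hc : c ∉ hdom h1) : Sls (hunion h1 h2) a c := by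
  induction H1 with
  | nil h a he =>
    have : hunion h h2 = h2 := by
      funext l; simp [hunion, he l]
    rw [this]; exact H2
  | cons h h' a b l hab ha ha' hrest tail ih =>
    have hadom : a ∈ hdom h := by simp [hdom, ha]
    have hac : a ≠ c := fun e => hc (e ▸ hadom)
    have h2a : h2 a = none := by
      by_contra hne
      exact (Set.disjoint_left.mp hdisj hadom) hne
    have hsub : ∀ m, m ∈ hdom h' → m ∈ hdom h := by
      intro m hm
      by_cases hma : m = a
      · subst hma; simp [hdom, ha']  at hm
      · simpa [hdom, hrest m hma] using hm
    have hdisj' : HDisj h' h2 :=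
      Set.disjoint_left.mpr fun m hm => Set.disjoint_left.mp hdisj (hsub m hm)
    have hc' : c ∉ hdom h' := fun hm => hc (hsub c hm)
    refine Sls.cons _ (hunion h' h2) a c l hac ?_ ?_ ?_ (ih H2 hdisj' hc')
    · simp [hunion, ha]
    · simp [hunion, ha', h2a]
    · intro m hma; simp [hunion, hrest m hma]

/-- Composition of list segments at an unallocated, non-sink-reaching point
yields a list segment. -/
theorem stmt17 (s : Vars → Loc) (x p y : Vars) (h1 h2 : Loc → Option Loc)
    (h1sls : Sls h1 (s x) (s p)) (h2sls : Sls h2 (s p) (s y))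
    (hdisj : HDisj h1 h2) (hy : s y ∉ hdom h1) :
    Sls (hunion h1 h2) (s x) (s y) := by
  exact sls_comp h1 h2 _ _ _ h1sls h2sls hdisj hy

end
end

section
/- QBF-style encoding of arbitrary valuations: for a finite set of variables X and stack s injective on X with nil ∉ s(X), a heap h satisfies (s,h) ⊨ ⊛_{x ∈ X} (x ↦ nil ∨ emp) if and only if dom(h) ⊆ s(X) and h(ℓ) = s(nil) for every ℓ ∈ dom(h). -/
section

open Classical

variable {Vars Loc : Type*}

/-- Semantics of the iterated separating conjunction `⊛_{x ∈ L} P x`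
(with `emp` for the empty list). -/
def IterStar (P : Vars → (Loc → Option Loc) → Prop) :
    List Vars → (Loc → Option Loc) → Prop
  | [], h => hdom h = ∅
  | x :: xs, h => ∃ h1 h2, HDisj h1 h2 ∧ h = hunion h1 h2 ∧
      P x h1 ∧ IterStar P xs h2

/-- Semantics of `x ↦ nil ∨ emp` under stack `s` with distinguished
variable `nilv`. -/
noncomputable def PtoNilOrEmp (s : Vars → Loc) (nilv : Vars) (x : Vars)
    (h : Loc → Option Loc) : Prop :=
  (h = fun m => if m = s x then some (s nilv) else none) ∨ hdom h = ∅

theorem key (s : Vars → Loc) (nilv : Vars) :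
    ∀ (L : List Vars) (h : Loc → Option Loc),
    IterStar (PtoNilOrEmp s nilv) L h ↔
      hdom h ⊆ s '' {x | x ∈ L} ∧ ∀ l ∈ hdom h, h l = some (s nilv) := by
  intro L
  induction L with
  | nil =>
    intro h
    simp only [IterStar]
    constructor
    · intro hd
      refine ⟨?_, ?_⟩
      · rw [hd]; intro l hl; exact hl.elim
      · intro l hl; rw [hd] at hl; exact hl.elim
    · rintro ⟨hsub, -⟩
      ext l
      simp only [Set.mem_empty_iff_false, iff_false]
      intro hl
      simpa using hsub hl
  | cons x xs ih =>
    intro h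
    constructor
    · rintro ⟨h1, h2, hdisj, rfl, hP, hrest⟩
      obtain ⟨hsub2, hpt2⟩ := (ih h2).mp hrest
      have hdom1 : hdom h1 ⊆ {s x} ∧ ∀ l ∈ hdom h1, h1 l = some (s nilv) := by
        rcases hP with hP | hP
        · subst hP
          constructor
          · intro l hl
            by_contra hne
            simp [hdom, hne] at hl
          · intro l hl
            have : l = s x := by by_contra hne; simp [hdom, hne] at hl
            simp [this]
        · rw [hP]
          exact ⟨fun l hl => hl.elim, fun l hl => hl.elim⟩
      constructor
      · intro l hl
        simp only [hdom, hunion, Set.mem_setOf_eq] at hl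
        rcases ho : h1 l with _ | a
        · have : l ∈ hdom h2 := by
            simp only [hdom, Set.mem_setOf_eq]
            intro h2n
            simp [ho, h2n, Option.orElse] at hl
          obtain ⟨y, hy, hyl⟩ := hsub2 this
          exact ⟨y, by simp [List.mem_cons]; right; exact hy, hyl⟩
        · have : l ∈ hdom h1 := by simp [hdom, ho]
          have := hdom1.1 this
          simp at this
          exact ⟨x, by simp, this.symm⟩
      · intro l hl
        rcases ho : h1 l with _ | a
        · have hv : hunion h1 h2 l = h2 l := by simp [hunion, ho, Option.orElse]
          rw [hv]
          apply hpt2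
          simp only [hdom, Set.mem_setOf_eq] at hl ⊢
          rwa [hv] at hl
        · have hv : hunion h1 h2 l = some a := by simp [hunion, ho, Option.orElse]
          rw [hv]
          have : h1 l = some (s nilv) := hdom1.2 l (by simp [hdom, ho])
          rw [ho] at this
          simpa using this
    · rintro ⟨hsub, hpt⟩
      refine ⟨fun m => if m = s x then h (s x) else none,
              fun m => if m = s x then none else h m, ?_, ?_, ?_, ?_⟩
      · rw [HDisj, Set.disjoint_left]
        intro l hl1 hl2
        simp only [hdom, Set.mem_setOf_eq] at hl1 hl2
        by_cases he : l = s x <;> simp [he] at hl1 hl2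
      · funext l
        by_cases he : l = s x <;> simp [hunion, he, Option.orElse]
        cases h (s x) <;> rfl
      · by_cases hx : h (s x) = none
        · right
          ext l
          simp only [hdom, Set.mem_setOf_eq, Set.mem_empty_iff_false, iff_false]
          by_cases he : l = s x <;> simp [he, hx]
        · left
          funext m
          by_cases he : m = s x <;> simp [he]
          exact hpt (s x) hx
      · rw [ih]
        constructor
        · intro l hl
          simp only [hdom, Set.mem_setOf_eq] at hl
          by_cases he : l = s x
          · simp [he] at hl
          · simp only [he, if_false] at hl
            obtain ⟨y, hy, hyl⟩ := hsub hl
            simp only [List.mem_cons, Set.mem_setOf_eq] at hy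
            rcases hy with rfl | hy
            · exact absurd hyl.symm he
            · exact ⟨y, hy, hyl⟩
        · intro l hl
          simp only [hdom, Set.mem_setOf_eq] at hl
          by_cases he : l = s x
          · simp [he] at hl
          · simp only [he, if_false] at hl ⊢
            exact hpt l hl

/-- QBF-style encoding of arbitrary valuations: for a finite set `X` of
variables on which `s` is injective and whose stack image avoids `s nil`,
a heap satisfies `⊛_{x ∈ X} (x ↦ nil ∨ emp)` iff its domain is contained in
`s '' X` and every allocated location points to `s nil`. -/
theorem stmt19 (s : Vars → Loc) (nilv : Vars) (X : Finset Vars)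
    (hinj : Set.InjOn s X) (hnil : s nilv ∉ s '' (X : Set Vars))
    (h : Loc → Option Loc) :
    IterStar (PtoNilOrEmp s nilv) X.toList h ↔
      hdom h ⊆ s '' (X : Set Vars) ∧ ∀ l ∈ hdom h, h l = some (s nilv) := by
  rw [key]
  simp [Finset.mem_toList]

end
end
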